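/- For all nonzero integers p, q, r, t with distinct values producing nonzero entries, with x1, x2, x3, y1, y2, y3 given by the parametric solution (with k = 1): x1 = ((p^4-r^4)t^2 - 2(p^4-q^4)t + p^4-q^4)p^2, x2 = ((p^4-r^4)t^2 - 2(p^4-r^4)t + p^4-q^4)q^2, x3 = ((p^4-r^4)t^2 - (p^4-q^4))r^2, y1 = ((p^4-r^4)t^2 - 2(p^4-r^4)t + p^4-q^4)p^2, y2 = ((p^4-r^4)t^2 - (p^4-q^4))q^2, y3 = ((p^4-r^4)t^2 - 2(p^4-q^4)t + p^4-q^4)r^2, the ratios y1/x2, y2/x3, y3/x1 are perfect squares of rationals (namely (p/q)^2, (q/r)^2, (r/p)^2 respectively). -/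
import Mathlib

theorem stmt_16 (p q r t : ℚ) (hp : p ≠ 0) (hq : q ≠ 0) (hr : r ≠ 0)
    (x1 x2 x3 y1 y2 y3 : ℚ)
    (hx1 : x1 = ((p^4-r^4)*t^2 - 2*(p^4-q^4)*t + p^4-q^4)*p^2)
    (hx2 : x2 = ((p^4-r^4)*t^2 - 2*(p^4-r^4)*t + p^4-q^4)*q^2)
    (hx3 : x3 = ((p^4-r^4)*t^2 - (p^4-q^4))*r^2)
    (hy1 : y1 = ((p^4-r^4)*t^2 - 2*(p^4-r^4)*t + p^4-q^4)*p^2)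
    (hy2 : y2 = ((p^4-r^4)*t^2 - (p^4-q^4))*q^2)
    (hy3 : y3 = ((p^4-r^4)*t^2 - 2*(p^4-q^4)*t + p^4-q^4)*r^2)
    (hx1' : x1 ≠ 0) (hx2' : x2 ≠ 0) (hx3' : x3 ≠ 0) :
    y1/x2 = (p/q)^2 ∧ y2/x3 = (q/r)^2 ∧ y3/x1 = (r/p)^2 := by
  subst hx1 hx2 hx3 hy1 hy2 hy3
  refine ⟨?_, ?_, ?_⟩ <;> rw [div_eq_iff (by assumption), div_pow] <;>
    field_simp <;> ring
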